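/- Define s₀ : ℝ → ℝ by s₀(x) = x³ − 4x² + 8x − 8 + 16/(eˣ + 1). Then s₀(x) < 0 for all x < 0 and s₀(x) > 0 for all x > 0. -/

import Mathlib

open Real

private noncomputable def gAux : ℝ → ℝ :=
  fun x => (x ^ 3 - 4 * x ^ 2 + 8 * x - 8) * (Real.exp x + 1) + 16

private lemma gAux_hasDerivAt (x : ℝ) :
    HasDerivAt gAux (x ^ 2 * (x - 1) * Real.exp x + (3 * x ^ 2 - 8 * x + 8)) x := by
  have h1 : HasDerivAt (fun x : ℝ => x ^ 3 - 4 * x ^ 2 + 8 * x - 8)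
      (3 * x ^ 2 - 8 * x + 8) x := by
    have := (((hasDerivAt_pow 3 x).sub ((hasDerivAt_pow 2 x).const_mul 4)).add
      ((hasDerivAt_id x).const_mul 8)).sub_const 8
    refine this.congr_deriv ?_
    ring
  have h2 : HasDerivAt (fun x : ℝ => Real.exp x + 1) (Real.exp x) x :=
    (Real.hasDerivAt_exp x).add_const 1
  have := (h1.mul h2).add_const 16
  refine this.congr_deriv ?_
  ring

private lemma gAux_deriv_pos (x : ℝ) : 0 < deriv gAux x := by
  rw [(gAux_hasDerivAt x).deriv]
  have he : 0 < Real.exp x := Real.exp_pos x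
  rcases lt_trichotomy x 0 with hx | hx | hx
  · -- use (1 - x) * exp x ≤ 1
    have h1 : 1 - x ≤ Real.exp (-x) := by
      have := Real.add_one_le_exp (-x); linarith
    have h2 : (1 - x) * Real.exp x ≤ 1 := by
      have := mul_le_mul_of_nonneg_right h1 he.le
      rwa [← Real.exp_add, neg_add_cancel, Real.exp_zero] at this
    nlinarith [mul_le_mul_of_nonneg_left h2 (sq_nonneg x), sq_nonneg (x - 2)]
  · subst hx; norm_num
  · rcases le_or_gt x 1 with hx1 | hx1
    · have h3 : Real.exp x ≤ 3 := by
        calc Real.exp x ≤ Real.exp 1 := Real.exp_le_exp.2 hx1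
        _ ≤ 2.7182818286 := Real.exp_one_lt_d9.le
        _ ≤ 3 := by norm_num
      have h4 : x ^ 2 * (1 - x) * Real.exp x ≤ x ^ 2 * (1 - x) * 3 :=
        mul_le_mul_of_nonneg_left h3
          (mul_nonneg (sq_nonneg x) (by linarith))
      nlinarith [sq_nonneg x, mul_nonneg (mul_nonneg hx.le hx.le) hx.le]
    · have h5 : 0 ≤ x ^ 2 * (x - 1) * Real.exp x :=
        mul_nonneg (mul_nonneg (sq_nonneg x) (by linarith)) he.le
      nlinarith [sq_nonneg (3 * x - 4)]

private lemma gAux_strictMono : StrictMono gAux :=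
  strictMono_of_deriv_pos gAux_deriv_pos

/-- Sign of `s₀(x) = x³ − 4x² + 8x − 8 + 16/(eˣ + 1)`:
negative for `x < 0` and positive for `x > 0`. -/
theorem s0_sign :
    (∀ x : ℝ, x < 0 → x ^ 3 - 4 * x ^ 2 + 8 * x - 8 + 16 / (Real.exp x + 1) < 0) ∧
    (∀ x : ℝ, 0 < x → 0 < x ^ 3 - 4 * x ^ 2 + 8 * x - 8 + 16 / (Real.exp x + 1)) := by
  have hg0 : gAux 0 = 0 := by norm_num [gAux]
  have hpos : ∀ x : ℝ, 0 < Real.exp x + 1 := fun x => by positivity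
  have hrepr : ∀ x : ℝ,
      x ^ 3 - 4 * x ^ 2 + 8 * x - 8 + 16 / (Real.exp x + 1) = gAux x / (Real.exp x + 1) := by
    intro x
    have := (hpos x).ne'
    field_simp [gAux]
    simp only [gAux]
    ring
  constructor
  · intro x hx
    rw [hrepr x]
    exact div_neg_of_neg_of_pos (by simpa [hg0] using gAux_strictMono hx) (hpos x)
  · intro x hx
    rw [hrepr x]
    exact div_pos (by simpa [hg0] using gAux_strictMono hx) (hpos x)
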